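/- For any real α > 0, lim_{z → +∞} Γ(z+α)/(Γ(z) · z^α) = 1. -/

import Mathlib

open Filter Real Topology

private lemma aux_base (α : ℝ) (hα : 0 < α) (hα1 : α < 1) :
    Filter.Tendsto (fun z : ℝ => Real.Gamma (z + α) / (Real.Gamma z * z ^ α))
      Filter.atTop (nhds 1) := by
  have h1 : Tendsto (fun z : ℝ => (z / (z + α)) ^ (1 - α)) atTop (𝓝 1) := by
    have hfrac : Tendsto (fun z : ℝ => z / (z + α)) atTop (𝓝 1) := by
      have h0 : Tendsto (fun z : ℝ => 1 / (1 + α / z)) atTop (𝓝 1) := by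
        have : Tendsto (fun z : ℝ => 1 + α / z) atTop (𝓝 1) := by
          have := (tendsto_const_nhds (x := α) (f := atTop (α := ℝ))).div_atTop tendsto_id
          simpa using tendsto_const_nhds.add this
        simpa using this.inv₀ (by norm_num)
      apply h0.congr'
      filter_upwards [eventually_gt_atTop 0] with z hz
      field_simp
    have := hfrac.rpow_const (p := 1 - α) (Or.inl one_ne_zero)
    simpa using this
  refine tendsto_of_tendsto_of_tendsto_of_le_of_le' h1 tendsto_const_nhds ?_ ?_
  · filter_upwards [eventually_gt_atTop 0] with z hz
    -- lower bound
    have hzα : (0:ℝ) < z + α := by linarith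
    have key := Real.Gamma_mul_add_mul_le_rpow_Gamma_mul_rpow_Gamma
      (s := z + α) (t := z + α + 1) (a := α) (b := 1 - α) hzα (by linarith) hα
      (by linarith) (by ring)
    have harg : α * (z + α) + (1 - α) * (z + α + 1) = z + 1 := by ring
    rw [harg, Real.Gamma_add_one (by positivity)] at key
    rw [show z + α + 1 = (z + α) + 1 by ring, Real.Gamma_add_one hzα.ne'] at key
    have hG : 0 < Real.Gamma (z + α) := Real.Gamma_pos_of_pos hzα
    have hGz : 0 < Real.Gamma z := Real.Gamma_pos_of_pos hz
    rw [Real.mul_rpow hzα.le hG.le] at key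
    have key2 : z * Real.Gamma z ≤ (z + α) ^ (1 - α) * Real.Gamma (z + α) := by
      calc z * Real.Gamma z ≤ Real.Gamma (z+α) ^ α * ((z+α)^(1-α) * Real.Gamma (z+α) ^ (1-α)) := key
        _ = (z + α) ^ (1 - α) * (Real.Gamma (z+α) ^ α * Real.Gamma (z+α) ^ (1-α)) := by ring
        _ = (z + α) ^ (1 - α) * Real.Gamma (z + α) := by
            rw [← Real.rpow_add hG, show α + (1-α) = 1 by ring, Real.rpow_one]
    rw [Real.div_rpow hz.le hzα.le]
    rw [div_le_div_iff₀ (by positivity) (by positivity)]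
    have hz1 : z ^ ((1:ℝ) - α) * z ^ α = z := by
      rw [← Real.rpow_add hz]; simp
    calc z ^ (1-α) * (Real.Gamma z * z ^ α) = z ^ (1-α) * z ^ α * Real.Gamma z := by ring
      _ = z * Real.Gamma z := by rw [hz1]
      _ ≤ (z + α) ^ (1-α) * Real.Gamma (z+α) := key2
      _ = Real.Gamma (z+α) * (z+α)^(1-α) := by ring
  · filter_upwards [eventually_gt_atTop 0] with z hz
    -- upper bound
    have hz1 : (0:ℝ) < z + 1 := by linarith
    have key := Real.Gamma_mul_add_mul_le_rpow_Gamma_mul_rpow_Gamma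
      (s := z + 1) (t := z) (a := α) (b := 1 - α) hz1 hz hα (by linarith) (by ring)
    have harg : α * (z + 1) + (1 - α) * z = z + α := by ring
    rw [harg, Real.Gamma_add_one hz.ne'] at key
    have hGz : 0 < Real.Gamma z := Real.Gamma_pos_of_pos hz
    rw [Real.mul_rpow hz.le hGz.le, mul_assoc, ← Real.rpow_add hGz,
      show α + (1-α) = 1 by ring, Real.rpow_one] at key
    rw [div_le_one (by positivity)]
    linarith [key]

private lemma aux_step (α : ℝ) (hα : 0 < α)
    (h : Filter.Tendsto (fun z : ℝ => Real.Gamma (z + α) / (Real.Gamma z * z ^ α))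
      Filter.atTop (nhds 1)) :
    Filter.Tendsto (fun z : ℝ => Real.Gamma (z + (α + 1)) / (Real.Gamma z * z ^ (α + 1)))
      Filter.atTop (nhds 1) := by
  have hfrac : Tendsto (fun z : ℝ => (z + α) / z) atTop (𝓝 1) := by
    have : Tendsto (fun z : ℝ => 1 + α / z) atTop (𝓝 1) := by
      have := (tendsto_const_nhds (x := α) (f := atTop (α := ℝ))).div_atTop tendsto_id
      simpa using tendsto_const_nhds.add this
    apply this.congr'
    filter_upwards [eventually_gt_atTop 0] with z hz
    field_simp
  have := h.mul hfrac
  rw [mul_one] at this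
  apply this.congr'
  filter_upwards [eventually_gt_atTop 0] with z hz
  have hzα : (0:ℝ) < z + α := by linarith
  rw [show z + (α+1) = (z + α) + 1 by ring, Real.Gamma_add_one hzα.ne',
    Real.rpow_add hz, Real.rpow_one]
  have hG : Real.Gamma z ≠ 0 := (Real.Gamma_pos_of_pos hz).ne'
  field_simp

private lemma aux_one :
    Filter.Tendsto (fun z : ℝ => Real.Gamma (z + 1) / (Real.Gamma z * z ^ (1:ℝ)))
      Filter.atTop (nhds 1) := by
  apply tendsto_const_nhds.congr'
  filter_upwards [eventually_gt_atTop 0] with z hz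
  rw [Real.Gamma_add_one hz.ne', Real.rpow_one]
  have hG : Real.Gamma z ≠ 0 := (Real.Gamma_pos_of_pos hz).ne'
  field_simp

private lemma aux_all (n : ℕ) : ∀ α : ℝ, 0 < α → α ≤ n →
    Filter.Tendsto (fun z : ℝ => Real.Gamma (z + α) / (Real.Gamma z * z ^ α))
      Filter.atTop (nhds 1) := by
  induction n with
  | zero => intro α hα h; exact absurd (hα.trans_le h) (by norm_num)
  | succ n ih =>
    intro α hα h
    rcases le_or_gt α n with h' | h'
    · exact ih α hα h'
    · rcases lt_or_ge α 1 with h1 | h1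
      · exact aux_base α hα h1
      · rcases eq_or_lt_of_le h1 with h1 | h1
        · rw [← h1]; exact aux_one
        · have := aux_step (α - 1) (by linarith) ?_
          · simpa using this
          · apply ih (α - 1) (by linarith)
            have : (α:ℝ) ≤ n + 1 := by exact_mod_cast h
            linarith

theorem stmt_3 (α : ℝ) (hα : 0 < α) :
    Filter.Tendsto (fun z : ℝ => Real.Gamma (z + α) / (Real.Gamma z * z ^ α))
      Filter.atTop (nhds 1) := by
  obtain ⟨n, hn⟩ := exists_nat_ge α
  exact aux_all n α hα hn
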